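/- Assume regularity condition (H). Let p_C ∈ (0,1) satisfy D_C(p_C) = 0 and let p_V ∈ (0,1) satisfy D_V(p_V) = 0. Then p_C ≤ p_V. (The off-platform posted price under the independent managed campaign is weakly below that under the sophisticated best-value managed campaign; hence consumer surplus and welfare are higher under the independent managed campaign.) -/
import Mathlib


open intervalIntegral

/-- The off-platform posted price under the independent managed
campaign is weakly below that under the sophisticated best-value managed
campaign: p_C ≤ p_V. -/
theorem independent_below_sophisticated
    (f F : ℝ → ℝ)
    (hf_cont : ContinuousOn f (Set.Icc 0 1))
    (hf_pos : ∀ x ∈ Set.Icc (0:ℝ) 1, 0 < f x)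
    (hf_logconcave : ConcaveOn ℝ (Set.Icc 0 1) (Real.log ∘ f))
    (hf_int : (∫ t in (0:ℝ)..1, f t) = 1)
    (hF : ∀ x, F x = ∫ t in (0:ℝ)..x, f t)
    (J : ℕ) (hJ : 2 ≤ J)
    (lam : ℝ) (hlam : lam ∈ Set.Ioo (0:ℝ) 1)
    (hreg : AntitoneOn (fun p : ℝ => 1 - F p - p * f p) (Set.Icc 0 1))
    (pC pV : ℝ) (hpC : pC ∈ Set.Ioo (0:ℝ) 1) (hpV : pV ∈ Set.Ioo (0:ℝ) 1)
    (hC : (1 - lam) * (1 - F pC - pC * f pC)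
        + lam * (J : ℝ) * (∫ v in pC..1,
            (F v ^ (J - 1) - pC * (((J : ℝ) - 1) * F v ^ (J - 2) * f v)) * f v) = 0)
    (hV : (1 - lam) * (1 - F pV - pV * f pV)
        + lam * (J : ℝ) * (∫ v in pV..1, F v ^ (J - 1) * f v) = 0) :
    pC ≤ pV := by
  by_contra hcon
  push_neg at hcon
  obtain ⟨hpC0, hpC1⟩ := hpC
  obtain ⟨hpV0, hpV1⟩ := hpV
  obtain ⟨hlam0, hlam1⟩ := hlam
  -- F is continuous on [0,1]
  have hfeq : F = fun x => ∫ t in (0:ℝ)..x, f t := funext hF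
  have hf_int01 : MeasureTheory.IntegrableOn f (Set.uIcc (0:ℝ) 1) :=
    (hf_cont.mono (by rw [Set.uIcc_of_le (by norm_num)])).integrableOn_compact (by
      rw [Set.uIcc_of_le (by norm_num)]; exact isCompact_Icc)
  have hFcont : ContinuousOn F (Set.Icc 0 1) := by
    rw [hfeq]
    have := intervalIntegral.continuousOn_primitive_interval (a := (0:ℝ)) (b := 1)
      (f := f) (μ := MeasureTheory.volume) hf_int01
    rwa [Set.uIcc_of_le (by norm_num : (0:ℝ) ≤ 1)] at this
  -- F is nonneg, and positive on (0,1]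
  have hFpos : ∀ v ∈ Set.Icc (0:ℝ) 1, 0 < v → 0 < F v := by
    intro v hv hv0
    rw [hF]
    apply intervalIntegral.intervalIntegral_pos_of_pos_on
    · exact (hf_cont.mono (Set.Icc_subset_Icc le_rfl hv.2)).intervalIntegrable_of_Icc hv0.le
    · intro x hx
      exact hf_pos x ⟨hx.1.le, hx.2.le.trans hv.2⟩
    · exact hv0
  have hFnonneg : ∀ v ∈ Set.Icc (0:ℝ) 1, 0 ≤ F v := by
    intro v hv
    rcases eq_or_lt_of_le hv.1 with h | h
    · rw [hF, ← h]; simp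
    · exact (hFpos v hv h).le
  -- integrability helpers
  have hcont_pow : ∀ n : ℕ, ContinuousOn (fun v => F v ^ n * f v) (Set.Icc (0:ℝ) 1) :=
    fun n => (hFcont.pow n).mul hf_cont
  have hII : ∀ (a b : ℝ), 0 ≤ a → b ≤ 1 → a ≤ b → ∀ n : ℕ,
      IntervalIntegrable (fun v => F v ^ n * f v) MeasureTheory.volume a b := by
    intro a b ha hb hab n
    exact ((hcont_pow n).mono (Set.Icc_subset_Icc ha hb)).intervalIntegrable_of_Icc hab
  -- Step A: first-term comparison
  have hA : (1 - lam) * (1 - F pC - pC * f pC) ≤ (1 - lam) * (1 - F pV - pV * f pV) :=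
    mul_le_mul_of_nonneg_left
      (hreg ⟨hpV0.le, hpV1.le⟩ ⟨hpC0.le, hpC1.le⟩ hcon.le) (by linarith)
  -- Step B: integral comparison for D_V
  have hB : (∫ v in pC..1, F v ^ (J - 1) * f v) ≤ ∫ v in pV..1, F v ^ (J - 1) * f v := by
    have hsplit : (∫ v in pV..1, F v ^ (J - 1) * f v)
        = (∫ v in pV..pC, F v ^ (J - 1) * f v) + ∫ v in pC..1, F v ^ (J - 1) * f v :=
      (intervalIntegral.integral_add_adjacent_intervals
        (hII pV pC hpV0.le hpC1.le hcon.le _) (hII pC 1 hpC0.le le_rfl hpC1.le _)).symm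
    have hnn : 0 ≤ ∫ v in pV..pC, F v ^ (J - 1) * f v := by
      apply intervalIntegral.integral_nonneg hcon.le
      intro u hu
      exact mul_nonneg (pow_nonneg (hFnonneg u ⟨hpV0.le.trans hu.1, hu.2.trans hpC1.le⟩) _)
        (hf_pos u ⟨hpV0.le.trans hu.1, hu.2.trans hpC1.le⟩).le
    linarith
  -- Step C: D_C(pC) < D_V(pC): the difference integral is strictly positive
  have hCint : IntervalIntegrable
      (fun v => (F v ^ (J - 1) - pC * (((J : ℝ) - 1) * F v ^ (J - 2) * f v)) * f v)
      MeasureTheory.volume pC 1 := by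
    apply ContinuousOn.intervalIntegrable_of_Icc hpC1.le
    have h1 : ContinuousOn F (Set.Icc pC 1) := hFcont.mono (Set.Icc_subset_Icc hpC0.le le_rfl)
    have h2 : ContinuousOn f (Set.Icc pC 1) := hf_cont.mono (Set.Icc_subset_Icc hpC0.le le_rfl)
    exact ((h1.pow _).sub
      (continuousOn_const.mul ((continuousOn_const.mul (h1.pow _)).mul h2))).mul h2
  have hdiff : (∫ v in pC..1, F v ^ (J - 1) * f v)
      - (∫ v in pC..1, (F v ^ (J - 1) - pC * (((J : ℝ) - 1) * F v ^ (J - 2) * f v)) * f v)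
      = ∫ v in pC..1, pC * ((J : ℝ) - 1) * F v ^ (J - 2) * f v * f v := by
    rw [← intervalIntegral.integral_sub (hII pC 1 hpC0.le le_rfl hpC1.le _) hCint]
    apply intervalIntegral.integral_congr
    intro x _
    ring
  have hpos : 0 < ∫ v in pC..1, pC * ((J : ℝ) - 1) * F v ^ (J - 2) * f v * f v := by
    apply intervalIntegral.intervalIntegral_pos_of_pos_on
    · apply ContinuousOn.intervalIntegrable_of_Icc hpC1.le
      have h1 : ContinuousOn F (Set.Icc pC 1) := hFcont.mono (Set.Icc_subset_Icc hpC0.le le_rfl)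
      have h2 : ContinuousOn f (Set.Icc pC 1) := hf_cont.mono (Set.Icc_subset_Icc hpC0.le le_rfl)
      exact (((continuousOn_const.mul (h1.pow _)).mul h2).mul h2)
    · intro x hx
      have hx01 : x ∈ Set.Icc (0:ℝ) 1 := ⟨hpC0.le.trans hx.1.le, hx.2.le⟩
      have hFx : 0 < F x := hFpos x hx01 (hpC0.trans hx.1)
      have hfx : 0 < f x := hf_pos x hx01
      have hJ1 : (0:ℝ) < (J : ℝ) - 1 := by
        have : (2:ℝ) ≤ (J:ℝ) := by exact_mod_cast hJ
        linarith
      positivity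
    · exact hpC1
  -- Combine
  have hDVpC : 0 < (1 - lam) * (1 - F pC - pC * f pC)
      + lam * (J : ℝ) * (∫ v in pC..1, F v ^ (J - 1) * f v) := by
    have hlamJ : 0 < lam * (J : ℝ) := by
      have : (0:ℝ) < (J:ℝ) := by positivity
      positivity
    nlinarith [hC, hdiff, hpos, mul_pos hlamJ hpos]
  have hlamJ' : 0 ≤ lam * (J : ℝ) := by positivity
  nlinarith [hV, hA, hB, mul_le_mul_of_nonneg_left hB hlamJ']
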